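/- Let f_KL(t) = t log t − t + 1 and f(t) = t log² t for t ≥ 0. Then the function t ↦ f(t)/f_KL(t) is increasing on (0,∞). -/

import Mathlib

open Real

noncomputable def fKL (t : ℝ) : ℝ := t * Real.log t - t + 1

noncomputable def fsq (t : ℝ) : ℝ := t * (Real.log t)^2

lemma log_ge_one_sub_inv {t : ℝ} (ht : 0 < t) : 1 - t⁻¹ ≤ Real.log t := by
  have h := Real.log_le_sub_one_of_pos (inv_pos.2 ht)
  rw [Real.log_inv] at h
  linarith

lemma fKL_pos {t : ℝ} (ht : 0 < t) (hne : t ≠ 1) : 0 < fKL t := by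
  have hinv : t⁻¹ ≠ 1 := fun h => hne (by field_simp at h; simp [h])
  have h := Real.log_lt_sub_one_of_pos (inv_pos.2 ht) hinv
  rw [Real.log_inv] at h
  have h3 := mul_lt_mul_of_pos_left h ht
  have h2 : t * (t⁻¹ - 1) = 1 - t := by field_simp
  rw [h2] at h3
  unfold fKL
  nlinarith

lemma hasDerivAt_fKL {t : ℝ} (ht : 0 < t) : HasDerivAt fKL (Real.log t) t := by
  have h : HasDerivAt (fun t : ℝ => t * Real.log t - t + 1)
      (1 * Real.log t + t * t⁻¹ - 1 + 0) t :=
    ((((hasDerivAt_id t).mul (Real.hasDerivAt_log ht.ne')).sub (hasDerivAt_id t)).add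
      (hasDerivAt_const t 1))
  have : (1 : ℝ) * Real.log t + t * t⁻¹ - 1 + 0 = Real.log t := by field_simp; ring
  rw [this] at h
  exact h

lemma hasDerivAt_fsq {t : ℝ} (ht : 0 < t) :
    HasDerivAt fsq ((Real.log t)^2 + 2 * Real.log t) t := by
  have h : HasDerivAt (fun t : ℝ => t * (Real.log t)^2)
      (1 * (Real.log t)^2 + t * ((2:ℕ) * Real.log t ^ 1 * t⁻¹)) t :=
    (hasDerivAt_id t).mul ((Real.hasDerivAt_log ht.ne').pow 2)
  have : (1:ℝ) * (Real.log t)^2 + t * ((2:ℕ) * Real.log t ^ 1 * t⁻¹)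
      = (Real.log t)^2 + 2 * Real.log t := by
    field_simp
    norm_num
  rw [this] at h
  exact h

noncomputable def chi (t : ℝ) : ℝ := (t + 1) * Real.log t - 2 * (t - 1)

lemma hasDerivAt_chi {t : ℝ} (ht : 0 < t) :
    HasDerivAt chi (Real.log t + t⁻¹ - 1) t := by
  have h : HasDerivAt (fun t : ℝ => (t + 1) * Real.log t - 2 * (t - 1))
      ((1 * Real.log t + (t + 1) * t⁻¹) - 2 * 1) t := by
    refine HasDerivAt.sub ?_ (((hasDerivAt_id t).sub_const 1).const_mul 2)
    exact ((hasDerivAt_id t).add_const 1).mul (Real.hasDerivAt_log ht.ne')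
  have : (1 * Real.log t + (t + 1) * t⁻¹) - 2 * 1 = Real.log t + t⁻¹ - 1 := by
    field_simp
    ring
  rw [this] at h
  exact h

lemma chi_mono : MonotoneOn chi (Set.Ioi (0:ℝ)) := by
  apply monotoneOn_of_deriv_nonneg (convex_Ioi 0)
  · intro x hx
    exact (hasDerivAt_chi hx).continuousAt.continuousWithinAt
  · rw [interior_Ioi]
    intro x hx
    exact (hasDerivAt_chi hx).differentiableAt.differentiableWithinAt
  · rw [interior_Ioi]
    intro x hx
    rw [(hasDerivAt_chi hx).deriv]
    have := log_ge_one_sub_inv hx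
    linarith

lemma chi_one : chi 1 = 0 := by simp [chi]

lemma chi_nonneg {t : ℝ} (ht : 1 ≤ t) : 0 ≤ chi t := by
  have := chi_mono (Set.mem_Ioi.2 one_pos) (Set.mem_Ioi.2 (lt_of_lt_of_le one_pos ht)) ht
  rwa [chi_one] at this

lemma chi_nonpos {t : ℝ} (ht : 0 < t) (ht1 : t ≤ 1) : chi t ≤ 0 := by
  have := chi_mono (Set.mem_Ioi.2 ht) (Set.mem_Ioi.2 one_pos) ht1
  rwa [chi_one] at this

noncomputable def psi (t : ℝ) : ℝ := 2 * fKL t - fsq t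

lemma hasDerivAt_psi {t : ℝ} (ht : 0 < t) :
    HasDerivAt psi (-(Real.log t)^2) t := by
  have h := ((hasDerivAt_fKL ht).const_mul 2).sub (hasDerivAt_fsq ht)
  have : 2 * Real.log t - ((Real.log t)^2 + 2 * Real.log t) = -(Real.log t)^2 := by ring
  rw [this] at h
  exact h

lemma psi_anti : AntitoneOn psi (Set.Ioi (0:ℝ)) := by
  apply antitoneOn_of_deriv_nonpos (convex_Ioi 0)
  · intro x hx
    exact (hasDerivAt_psi hx).continuousAt.continuousWithinAt
  · rw [interior_Ioi]
    intro x hx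
    exact (hasDerivAt_psi hx).differentiableAt.differentiableWithinAt
  · rw [interior_Ioi]
    intro x hx
    rw [(hasDerivAt_psi hx).deriv]
    exact neg_nonpos.2 (sq_nonneg _)

lemma psi_one : psi 1 = 0 := by simp [psi, fKL, fsq]

lemma ratio_le_two {t : ℝ} (ht : 0 < t) (ht1 : t < 1) : fsq t / fKL t ≤ 2 := by
  have h := psi_anti (Set.mem_Ioi.2 ht) (Set.mem_Ioi.2 one_pos) ht1.le
  rw [psi_one] at h
  rw [div_le_iff₀ (fKL_pos ht ht1.ne)]
  unfold psi at h
  linarith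

lemma two_le_ratio {t : ℝ} (ht : 1 < t) : 2 ≤ fsq t / fKL t := by
  have h := psi_anti (Set.mem_Ioi.2 one_pos) (Set.mem_Ioi.2 (lt_trans one_pos ht)) ht.le
  rw [psi_one] at h
  rw [le_div_iff₀ (fKL_pos (lt_trans one_pos ht) ht.ne')]
  unfold psi at h
  linarith

lemma hasDerivAt_F {t : ℝ} (ht : 0 < t) (hne : t ≠ 1) :
    HasDerivAt (fun t : ℝ => if t = 1 then 2 else fsq t / fKL t)
      ((Real.log t * chi t) / (fKL t)^2) t := by
  have hq : HasDerivAt (fun t : ℝ => fsq t / fKL t)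
      ((Real.log t * chi t) / (fKL t)^2) t := by
    have h := (hasDerivAt_fsq ht).div (hasDerivAt_fKL ht) (fKL_pos ht hne).ne'
    refine h.congr_deriv ?_
    rw [div_eq_div_iff (pow_ne_zero 2 (fKL_pos ht hne).ne') (pow_ne_zero 2 (fKL_pos ht hne).ne')]
    unfold fsq fKL chi
    ring
  apply hq.congr_of_eventuallyEq
  filter_upwards [eventually_ne_nhds hne] with y hy
  simp [hy]

lemma mono_Ioo : MonotoneOn (fun t : ℝ => if t = 1 then 2 else fsq t / fKL t)
    (Set.Ioo (0:ℝ) 1) := by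
  apply monotoneOn_of_deriv_nonneg (convex_Ioo 0 1)
  · intro x hx
    exact (hasDerivAt_F hx.1 hx.2.ne).continuousAt.continuousWithinAt
  · rw [isOpen_Ioo.interior_eq]
    intro x hx
    exact (hasDerivAt_F hx.1 hx.2.ne).differentiableAt.differentiableWithinAt
  · rw [isOpen_Ioo.interior_eq]
    intro x hx
    rw [(hasDerivAt_F hx.1 hx.2.ne).deriv]
    apply div_nonneg _ (by positivity)
    have h1 : Real.log x ≤ 0 := Real.log_nonpos hx.1.le hx.2.le
    have h2 : chi x ≤ 0 := chi_nonpos hx.1 hx.2.le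
    nlinarith

lemma mono_Ioi : MonotoneOn (fun t : ℝ => if t = 1 then 2 else fsq t / fKL t)
    (Set.Ioi (1:ℝ)) := by
  apply monotoneOn_of_deriv_nonneg (convex_Ioi 1)
  · intro x hx
    exact (hasDerivAt_F (lt_trans one_pos hx) (ne_of_gt hx)).continuousAt.continuousWithinAt
  · rw [interior_Ioi]
    intro x hx
    exact (hasDerivAt_F (lt_trans one_pos hx) (ne_of_gt hx)).differentiableAt.differentiableWithinAt
  · rw [interior_Ioi]
    intro x hx
    rw [(hasDerivAt_F (lt_trans one_pos hx) (ne_of_gt hx)).deriv]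
    apply div_nonneg _ (by positivity)
    have h1 : 0 ≤ Real.log x := Real.log_nonneg (le_of_lt hx)
    have h2 : 0 ≤ chi x := chi_nonneg (le_of_lt hx)
    exact mul_nonneg h1 h2

/-- The ratio `t ↦ f(t)/f_KL(t)` (continuously extended by the value `2` at `t = 1`)
is increasing on `(0, ∞)`. -/
theorem stmt_1 :
    MonotoneOn (fun t : ℝ => if t = 1 then 2 else fsq t / fKL t) (Set.Ioi (0 : ℝ)) := by
  intro x hx y hy hxy
  rw [Set.mem_Ioi] at hx hy
  show (if x = 1 then (2:ℝ) else fsq x / fKL x) ≤ (if y = 1 then 2 else fsq y / fKL y)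
  rcases eq_or_lt_of_le hxy with rfl | hlt
  · exact le_refl _
  rcases lt_trichotomy y 1 with hy1 | hy1 | hy1
  · exact mono_Ioo ⟨hx, lt_trans hlt hy1⟩ ⟨hy, hy1⟩ hxy
  · subst hy1
    simp only [if_pos rfl, if_neg hlt.ne]
    exact ratio_le_two hx hlt
  · rcases lt_trichotomy x 1 with hx1 | hx1 | hx1
    · calc (if x = 1 then 2 else fsq x / fKL x) ≤ 2 := by
            rw [if_neg hx1.ne]; exact ratio_le_two hx hx1
        _ ≤ _ := by rw [if_neg hy1.ne']; exact two_le_ratio hy1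
    · subst hx1
      simp only [if_pos rfl, if_neg hy1.ne']
      exact two_le_ratio hy1
    · exact mono_Ioi hx1 hy1 hxy
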